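/- Consider the dynamics ẋ = h(x) := f(x) + Σ_{p=1}^{d} g_p(x)·u[αᵖ] on ℝⁿ with constant control u ∈ ℝᵐ over [0, Δt], where f and each g_p are continuously differentiable, and where for each k, l one has |∂fₖ/∂x_l| ≤ wₖ·f̄ₖ and |∂g_{p,k}/∂x_l| ≤ wₖ·ḡ_{p,k} everywhere. Let P = [p⁻, p⁺] be a box with x(t) ∈ P for all t ∈ [0, Δt], let H = [H⁻, H⁺] be a box with h(ξ) ∈ H for all ξ ∈ P, and let R be a box with x(0) ∈ R. Set cₖ = wₖ·(f̄ₖ + Σ_{p=1}^{d} ḡ_{p,k}·|u[αᵖ]|)·Σ_{l=1}^{n} max(|H⁻_l|, |H⁺_l|). Then for every solution x of the ODE with x(0) ∈ R, and for each coordinate k: xₖ(Δt) ∈ Rₖ + Hₖ·Δt + [−cₖ, cₖ]·(Δt²/2), where the sums are Minkowski sums of real intervals. In particular, the box with these componentwise intervals over-approximates the reachable set at time Δt from R. -/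

import Mathlib

/-- Monomial u[α] = ∏ⱼ uⱼ^{αⱼ}. -/
def monom {m : ℕ} (u : Fin m → ℝ) (α : Fin m → ℕ) : ℝ := ∏ j, u j ^ α j

/-- **Theorem 2, data-driven reachable set over-approximation.**
For the dynamics `ẋ = h(x) = f(x) + ∑ₚ gₚ(x)·u[αᵖ]` with constant control `u`
over `[0, Δt]`, with partial-derivative bounds `|∂fₖ/∂xₗ| ≤ wₖ f̄ₖ` and
`|∂g_{p,k}/∂xₗ| ≤ wₖ ḡ_{p,k}`, a box `P` containing the trajectory, a box `H`
enclosing `h` on `P`, and a box `R` containing `x(0)`, every solution satisfies,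
for `cₖ = wₖ (f̄ₖ + ∑ₚ ḡ_{p,k} |u[αᵖ]|) · ∑ₗ max |Hₗ⁻| |Hₗ⁺|`, that
`xₖ(Δt) ∈ Rₖ + Hₖ·Δt + [−cₖ, cₖ]·(Δt²/2)` componentwise. -/
theorem reachable_set_over_approximation
    (n m d : ℕ) (w : Fin n → ℝ) (hw : ∀ i, 0 < w i)
    (α : Fin d → Fin m → ℕ) (u : Fin m → ℝ)
    (Δt : ℝ) (hΔt : 0 ≤ Δt)
    (f : (Fin n → ℝ) → Fin n → ℝ) (g : Fin d → (Fin n → ℝ) → Fin n → ℝ)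
    (hfC : ContDiff ℝ 1 f) (hgC : ∀ p, ContDiff ℝ 1 (g p))
    (fbar : Fin n → ℝ) (gbar : Fin d → Fin n → ℝ)
    (hJf : ∀ (x : Fin n → ℝ) (k l : Fin n),
      |fderiv ℝ (fun y => f y k) x (Pi.single l 1)| ≤ w k * fbar k)
    (hJg : ∀ (p : Fin d) (x : Fin n → ℝ) (k l : Fin n),
      |fderiv ℝ (fun y => g p y k) x (Pi.single l 1)| ≤ w k * gbar p k)
    (pl pu Hl Hu Rl Ru : Fin n → ℝ)
    (x : ℝ → Fin n → ℝ)
    (hx : ∀ t ∈ Set.Icc (0 : ℝ) Δt,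
      HasDerivAt x (fun k => f (x t) k + ∑ p, g p (x t) k * monom u (α p)) t)
    (hP : ∀ t ∈ Set.Icc (0 : ℝ) Δt, x t ∈ Set.Icc pl pu)
    (hH : ∀ ξ ∈ Set.Icc pl pu,
      (fun k => f ξ k + ∑ p, g p ξ k * monom u (α p)) ∈ Set.Icc Hl Hu)
    (hR : x 0 ∈ Set.Icc Rl Ru) :
    ∀ k : Fin n,
      ∃ r ∈ Set.Icc (Rl k) (Ru k), ∃ hk ∈ Set.Icc (Hl k) (Hu k),
        ∃ ck ∈ Set.Icc
          (-(w k * (fbar k + ∑ p, gbar p k * |monom u (α p)|) *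
              ∑ l, max |Hl l| |Hu l|))
          (w k * (fbar k + ∑ p, gbar p k * |monom u (α p)|) *
              ∑ l, max |Hl l| |Hu l|),
          x Δt k = r + hk * Δt + ck * (Δt ^ 2 / 2) := by
  classical
  intro k
  set h : (Fin n → ℝ) → Fin n → ℝ :=
    fun y i => f y i + ∑ p, g p y i * monom u (α p) with hhdef
  set S : ℝ := ∑ l, max |Hl l| |Hu l| with hSdef
  set L : ℝ := w k * (fbar k + ∑ p, gbar p k * |monom u (α p)|) with hLdef
  -- nonnegativity facts
  have hfb : 0 ≤ w k * fbar k := le_trans (abs_nonneg _) (hJf (x 0) k k)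
  have hgb : ∀ p, 0 ≤ w k * gbar p k :=
    fun p => le_trans (abs_nonneg _) (hJg p (x 0) k k)
  have hLnn : 0 ≤ L := by
    rw [hLdef, mul_add, Finset.mul_sum]
    refine add_nonneg hfb (Finset.sum_nonneg fun p _ => ?_)
    rw [← mul_assoc]
    exact mul_nonneg (hgb p) (abs_nonneg _)
  have hSnn : 0 ≤ S :=
    Finset.sum_nonneg fun l _ => le_trans (abs_nonneg _) (le_max_left _ _)
  have hCnn : 0 ≤ L * S := mul_nonneg hLnn hSnn
  have h0mem : (0 : ℝ) ∈ Set.Icc (0 : ℝ) Δt := ⟨le_refl _, hΔt⟩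
  have hHx0 := hH (x 0) (hP 0 h0mem)
  have hkmem : h (x 0) k ∈ Set.Icc (Hl k) (Hu k) := ⟨hHx0.1 k, hHx0.2 k⟩
  rcases eq_or_lt_of_le hΔt with h0 | h0
  · -- Δt = 0
    refine ⟨x 0 k, ⟨hR.1 k, hR.2 k⟩, h (x 0) k, hkmem, 0,
      ⟨by linarith, hCnn⟩, ?_⟩
    rw [← h0]; ring_nf
  -- Δt > 0
  -- coordinate derivatives
  have hxl : ∀ t ∈ Set.Icc (0 : ℝ) Δt, ∀ l,
      HasDerivAt (fun s => x s l) (h (x t) l) t :=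
    fun t ht l => hasDerivAt_pi.1 (hx t ht) l
  -- bound on h along trajectory
  have hbound : ∀ t ∈ Set.Icc (0 : ℝ) Δt, ∀ l,
      |h (x t) l| ≤ max |Hl l| |Hu l| := by
    intro t ht l
    have hm := hH (x t) (hP t ht)
    exact abs_le_max_abs_abs (hm.1 l) (hm.2 l)
  -- coordinate displacement bound
  have hdisp : ∀ t ∈ Set.Icc (0 : ℝ) Δt, ∀ l,
      |x t l - x 0 l| ≤ max |Hl l| |Hu l| * t := by
    intro t ht l
    have := norm_image_sub_le_of_norm_deriv_le_segment'
      (f := fun s => x s l) (f' := fun s => h (x s) l) (a := 0) (b := Δt)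
      (C := max |Hl l| |Hu l|)
      (fun s hs => (hxl s hs l).hasDerivWithinAt)
      (fun s hs => by
        simpa [Real.norm_eq_abs] using hbound s (Set.Ico_subset_Icc_self hs) l)
      t ht
    simpa [Real.norm_eq_abs] using this
  -- differentiability of the coordinate functions
  have hfk : Differentiable ℝ (fun y => f y k) :=
    differentiable_pi.1 (hfC.differentiable one_ne_zero) k
  have hgk : ∀ p, Differentiable ℝ (fun y => g p y k) :=
    fun p => differentiable_pi.1 ((hgC p).differentiable one_ne_zero) k
  -- the total derivative of h_k
  set Dk : (Fin n → ℝ) → (Fin n → ℝ) →L[ℝ] ℝ := fun y =>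
    fderiv ℝ (fun y => f y k) y +
      ∑ p, (monom u (α p)) • fderiv ℝ (fun y => g p y k) y with hDkdef
  have hhk : ∀ y, HasFDerivAt (fun y => h y k) (Dk y) y := by
    intro y
    have h1 := (hfk y).hasFDerivAt
    have h2 : ∀ p, HasFDerivAt (fun y => g p y k * monom u (α p))
        ((monom u (α p)) • fderiv ℝ (fun y => g p y k) y) y :=
      fun p => ((hgk p y).hasFDerivAt).mul_const _
    exact h1.add (HasFDerivAt.fun_sum fun p _ => h2 p)
  -- bound on Dk applied to a standard basis vector
  have hDsingle : ∀ y l, |Dk y (Pi.single l 1)| ≤ L := by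
    intro y l
    have heq : Dk y (Pi.single l 1) =
        fderiv ℝ (fun y => f y k) y (Pi.single l 1) +
          ∑ p, monom u (α p) * fderiv ℝ (fun y => g p y k) y (Pi.single l 1) := by
      simp [hDkdef, ContinuousLinearMap.sum_apply, smul_eq_mul]
    rw [heq]
    have hLeq : w k * fbar k + ∑ p, |monom u (α p)| * (w k * gbar p k) = L := by
      rw [hLdef, mul_add, Finset.mul_sum]
      congr 1
      exact Finset.sum_congr rfl fun p _ => by ring
    calc |fderiv ℝ (fun y => f y k) y (Pi.single l 1) +
            ∑ p, monom u (α p) * fderiv ℝ (fun y => g p y k) y (Pi.single l 1)|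
        ≤ |fderiv ℝ (fun y => f y k) y (Pi.single l 1)| +
            |∑ p, monom u (α p) * fderiv ℝ (fun y => g p y k) y (Pi.single l 1)| :=
          abs_add_le _ _
      _ ≤ w k * fbar k + ∑ p, |monom u (α p)| * (w k * gbar p k) := by
          refine add_le_add (hJf y k l) ?_
          refine (Finset.abs_sum_le_sum_abs _ _).trans ?_
          refine Finset.sum_le_sum fun p _ => ?_
          rw [abs_mul]
          exact mul_le_mul_of_nonneg_left (hJg p y k l) (abs_nonneg _)
      _ = L := hLeq
  -- bound on Dk applied to a general vector
  have hDapp : ∀ y (v : Fin n → ℝ), |Dk y v| ≤ L * ∑ l, |v l| := by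
    intro y v
    have hv : (v : Fin n → ℝ) = ∑ l, v l • (Pi.single l 1 : Fin n → ℝ) := by
      funext i
      simp [Finset.sum_apply, Pi.single_apply, mul_ite]
    calc |Dk y v| = |∑ l, v l * Dk y (Pi.single l 1)| := by
          conv_lhs => rw [hv]
          rw [map_sum]
          simp [smul_eq_mul]
      _ ≤ ∑ l, |v l| * |Dk y (Pi.single l 1)| := by
          refine (Finset.abs_sum_le_sum_abs _ _).trans ?_
          exact le_of_eq (Finset.sum_congr rfl fun l _ => abs_mul _ _)
      _ ≤ ∑ l, |v l| * L :=
          Finset.sum_le_sum fun l _ =>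
            mul_le_mul_of_nonneg_left (hDsingle y l) (abs_nonneg _)
      _ = L * ∑ l, |v l| := by rw [← Finset.sum_mul]; ring
  -- Lipschitz estimate for h_k
  have hlip : ∀ y z : Fin n → ℝ, |h y k - h z k| ≤ L * ∑ l, |y l - z l| := by
    intro y z
    set γ : ℝ → Fin n → ℝ := fun s => z + s • (y - z) with hγdef
    have hγd : ∀ s : ℝ, HasDerivAt γ (y - z) s := by
      intro s
      have := ((hasDerivAt_id s).smul_const (y - z)).const_add z
      rw [one_smul] at this
      exact this
    have hφ : ∀ s : ℝ, HasDerivAt (fun s => h (γ s) k) (Dk (γ s) (y - z)) s :=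
      fun s => (hhk (γ s)).comp_hasDerivAt s (hγd s)
    have key := norm_image_sub_le_of_norm_deriv_le_segment'
      (f := fun s => h (γ s) k) (f' := fun s => Dk (γ s) (y - z))
      (a := 0) (b := 1) (C := L * ∑ l, |y l - z l|)
      (fun s _ => (hφ s).hasDerivWithinAt)
      (fun s _ => by
        simpa [Real.norm_eq_abs] using hDapp (γ s) (y - z))
      1 (Set.right_mem_Icc.2 zero_le_one)
    have hγ1 : γ 1 = y := by funext i; simp [hγdef]
    have hγ0 : γ 0 = z := by funext i; simp [hγdef]
    simpa [Real.norm_eq_abs, hγ1, hγ0] using key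
  -- the remainder function
  set hk0 : ℝ := h (x 0) k with hk0def
  have hψd : ∀ t ∈ Set.Icc (0 : ℝ) Δt,
      HasDerivAt (fun s => x s k - x 0 k - hk0 * s) (h (x t) k - hk0) t := by
    intro t ht
    have h1 := (hxl t ht k).sub_const (x 0 k)
    have h2 : HasDerivAt (fun s : ℝ => hk0 * s) hk0 t := by
      simpa using (hasDerivAt_id t).const_mul hk0
    exact h1.sub h2
  have hψbound : ∀ t ∈ Set.Ico (0 : ℝ) Δt, |h (x t) k - hk0| ≤ L * S * t := by
    intro t ht
    have ht' : t ∈ Set.Icc (0 : ℝ) Δt := Set.Ico_subset_Icc_self ht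
    have h1 := hlip (x t) (x 0)
    have h2 : ∑ l, |x t l - x 0 l| ≤ S * t := by
      rw [hSdef, Finset.sum_mul]
      exact Finset.sum_le_sum fun l _ => hdisp t ht' l
    calc |h (x t) k - hk0| ≤ L * ∑ l, |x t l - x 0 l| := h1
      _ ≤ L * (S * t) := mul_le_mul_of_nonneg_left h2 hLnn
      _ = L * S * t := by ring
  have hψ : |x Δt k - x 0 k - hk0 * Δt| ≤ L * S / 2 * Δt ^ 2 := by
    have hB : ∀ t : ℝ, HasDerivAt (fun t : ℝ => L * S / 2 * t ^ 2) (L * S * t) t := by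
      intro t
      have := (hasDerivAt_pow 2 t).const_mul (L * S / 2)
      refine this.congr_deriv ?_
      push_cast
      ring
    have key := image_norm_le_of_norm_deriv_right_le_deriv_boundary
      (f := fun s => x s k - x 0 k - hk0 * s)
      (f' := fun t => h (x t) k - hk0) (a := 0) (b := Δt)
      (B := fun t => L * S / 2 * t ^ 2) (B' := fun t => L * S * t)
      (fun t ht => (hψd t ht).continuousAt.continuousWithinAt)
      (fun t ht => (hψd t (Set.Ico_subset_Icc_self ht)).hasDerivWithinAt)
      (by simp) hB
      (fun t ht => by simpa [Real.norm_eq_abs] using hψbound t ht)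
      (Set.right_mem_Icc.2 hΔt)
    simpa [Real.norm_eq_abs] using key
  have hpos : (0 : ℝ) < Δt ^ 2 / 2 := by positivity
  set ck : ℝ := (x Δt k - x 0 k - hk0 * Δt) / (Δt ^ 2 / 2) with hckdef
  have hckbound : |ck| ≤ L * S := by
    rw [hckdef, abs_div, abs_of_pos hpos, div_le_iff₀ hpos]
    calc |x Δt k - x 0 k - hk0 * Δt| ≤ L * S / 2 * Δt ^ 2 := hψ
      _ = L * S * (Δt ^ 2 / 2) := by ring
  refine ⟨x 0 k, ⟨hR.1 k, hR.2 k⟩, hk0, hkmem, ck, ?_, ?_⟩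
  · exact ⟨neg_le_of_abs_le hckbound, le_of_abs_le hckbound⟩
  · rw [hckdef]
    field_simp
    ring
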